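/- Braikenridge–Maclaurin theorem: Suppose three red lines meet three blue lines in ℙ²(ℂ) in 9 distinct points, and 3 of these points lie on a line L not containing any of the other 6 points. Then the remaining 6 points lie on a (possibly degenerate) conic. -/

import Mathlib

open MvPolynomial Matrix Finset

-- cross product zero implies proportional
lemma bm_cross_zero {x y : Fin 3 → ℂ} (hx : x ≠ 0) (h : crossProduct x y = 0) :
    ∃ c : ℂ, y = c • x := by
  by_contra hc
  push_neg at hc
  have hli : LinearIndependent ℂ ![x, y] :=
    (LinearIndependent.pair_iff' hx).mpr (fun a h' => hc a h'.symm)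
  exact crossProduct_ne_zero_iff_linearIndependent.mpr hli h

lemma bm_triple (u x y : Fin 3 → ℂ) :
    crossProduct u (crossProduct x y) = (u ⬝ᵥ y) • x - (u ⬝ᵥ x) • y := by
  funext k
  fin_cases k <;>
    simp [cross_apply, dotProduct, Fin.sum_univ_three] <;> ring

lemma bm_la {u v x y : Fin 3 → ℂ} (hu : u ≠ 0) (hx : x ≠ 0)
    (hxy : ∀ c : ℂ, y ≠ c • x)
    (h1 : u ⬝ᵥ x = 0) (h2 : u ⬝ᵥ y = 0) (h3 : v ⬝ᵥ x = 0) (h4 : v ⬝ᵥ y = 0) :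
    ∃ c : ℂ, v = c • u := by
  have hnz : crossProduct x y ≠ 0 := by
    refine crossProduct_ne_zero_iff_linearIndependent.mpr ?_
    exact (LinearIndependent.pair_iff' hx).mpr (fun a h => hxy a h.symm)
  have hun : crossProduct (crossProduct x y) u = 0 := by
    rw [← cross_anticomm, bm_triple, h1, h2]; simp
  have hvn : crossProduct (crossProduct x y) v = 0 := by
    rw [← cross_anticomm, bm_triple, h3, h4]; simp
  obtain ⟨c, hc⟩ := bm_cross_zero hnz hun
  obtain ⟨d, hd⟩ := bm_cross_zero hnz hvn
  have hc0 : c ≠ 0 := by rintro rfl; rw [zero_smul] at hc; exact hu hc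
  refine ⟨d / c, ?_⟩
  rw [hd, hc, smul_smul]
  congr 1
  field_simp

noncomputable def bmVec (F : MvPolynomial (Fin 3) ℂ) : Fin 3 → ℂ :=
  fun i => coeff (Finsupp.single i 1) F

lemma bm_weight (d : Fin 3 →₀ ℕ) :
    (Finsupp.weight (1 : Fin 3 → ℕ)) d = d 0 + d 1 + d 2 := by
  rw [Finsupp.weight_apply, Finsupp.sum_fintype _ _ (fun i => by simp), Fin.sum_univ_three]
  simp

lemma bm_dsum (d : Fin 3 →₀ ℕ) : (d.sum fun _ k => k) = d 0 + d 1 + d 2 := by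
  rw [Finsupp.sum_fintype _ _ (fun i => rfl), Fin.sum_univ_three]

lemma bm_single_of_weight {d : Fin 3 →₀ ℕ}
    (h : (Finsupp.weight (1 : Fin 3 → ℕ)) d = 1) : ∃ i, d = Finsupp.single i 1 := by
  rw [bm_weight] at h
  have h' : (d 0 = 1 ∧ d 1 = 0 ∧ d 2 = 0) ∨ (d 0 = 0 ∧ d 1 = 1 ∧ d 2 = 0) ∨
      (d 0 = 0 ∧ d 1 = 0 ∧ d 2 = 1) := by omega
  rcases h' with ⟨h0, h1, h2⟩ | ⟨h0, h1, h2⟩ | ⟨h0, h1, h2⟩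
  · exact ⟨0, Finsupp.ext fun j => by fin_cases j <;> simp [Finsupp.single_apply, h0, h1, h2]⟩
  · exact ⟨1, Finsupp.ext fun j => by fin_cases j <;> simp [Finsupp.single_apply, h0, h1, h2]⟩
  · exact ⟨2, Finsupp.ext fun j => by fin_cases j <;> simp [Finsupp.single_apply, h0, h1, h2]⟩

lemma bm_eq_sum (F : MvPolynomial (Fin 3) ℂ) (hF : F.IsHomogeneous 1) :
    F = ∑ i : Fin 3, C (bmVec F i) * X i := by
  apply MvPolynomial.ext
  intro d
  rw [coeff_sum]
  simp only [coeff_C_mul, coeff_X', mul_ite, mul_one, mul_zero]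
  by_cases hd : ∃ i, d = Finsupp.single i 1
  · obtain ⟨i, rfl⟩ := hd
    rw [Finset.sum_eq_single i]
    · rw [if_pos rfl]; rfl
    · intro i' _ hne
      rw [if_neg]
      intro hcon
      rw [Finsupp.single_eq_single_iff] at hcon
      rcases hcon with ⟨h1, -⟩ | ⟨h1, -⟩
      · exact hne h1
      · exact one_ne_zero h1
    · intro h; exact absurd (Finset.mem_univ i) h
  · have h0 : coeff d F = 0 := by
      by_contra hcon
      exact hd (by
        obtain ⟨i, hi⟩ := bm_single_of_weight (hF hcon)
        exact ⟨i, hi⟩)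
    rw [h0]
    symm
    apply Finset.sum_eq_zero
    intro i _
    rw [if_neg]
    intro hcon
    exact hd ⟨i, hcon.symm⟩

lemma bm_eval_dot {F : MvPolynomial (Fin 3) ℂ} (hF : F.IsHomogeneous 1) (x : Fin 3 → ℂ) :
    eval x F = bmVec F ⬝ᵥ x := by
  conv_lhs => rw [bm_eq_sum F hF]
  rw [map_sum]
  simp [dotProduct]

lemma bm_vec_ne {F : MvPolynomial (Fin 3) ℂ} (hF : F.IsHomogeneous 1) (h0 : F ≠ 0) :
    bmVec F ≠ 0 := by
  intro h
  apply h0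
  rw [bm_eq_sum F hF]
  apply Finset.sum_eq_zero
  intro i _
  rw [show bmVec F i = 0 from congrFun h i]
  simp

lemma bm_basis {a : Fin 3 → ℂ} (ha : a ≠ 0) :
    ∃ b₁ b₂ : Fin 3 → ℂ, a ⬝ᵥ b₁ = 0 ∧ a ⬝ᵥ b₂ = 0 ∧
      (∀ x : Fin 3 → ℂ, a ⬝ᵥ x = 0 → ∃ A B : ℂ, x = A • b₁ + B • b₂) ∧
      (∀ A B : ℂ, A • b₁ + B • b₂ = 0 → A = 0 ∧ B = 0) := by
  obtain ⟨k, hk⟩ : ∃ k, a k ≠ 0 := by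
    by_contra h; push_neg at h; exact ha (funext h)
  fin_cases k
  · have h0 : a 0 ≠ 0 := hk
    refine ⟨![-(a 1)/(a 0), 1, 0], ![-(a 2)/(a 0), 0, 1], ?_, ?_, ?_, ?_⟩
    · simp only [dotProduct, Fin.sum_univ_three, Matrix.cons_val_zero, Matrix.cons_val_one,
        Matrix.head_cons, Matrix.cons_val_two, Matrix.tail_cons]
      field_simp
      ring
    · simp only [dotProduct, Fin.sum_univ_three, Matrix.cons_val_zero, Matrix.cons_val_one,
        Matrix.head_cons, Matrix.cons_val_two, Matrix.tail_cons]
      field_simp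
      ring
    · intro x hx
      simp only [dotProduct, Fin.sum_univ_three] at hx
      refine ⟨x 1, x 2, ?_⟩
      funext mj
      fin_cases mj
      · show x 0 = _
        simp only [Pi.add_apply, Pi.smul_apply, smul_eq_mul, Fin.zero_eta, Matrix.cons_val_zero]
        field_simp
        linear_combination hx
      · show x 1 = _
        simp
      · show x 2 = _
        simp
    · intro A B h
      exact ⟨by simpa using congrFun h 1, by simpa using congrFun h 2⟩
  · have h0 : a 1 ≠ 0 := hk
    refine ⟨![1, -(a 0)/(a 1), 0], ![0, -(a 2)/(a 1), 1], ?_, ?_, ?_, ?_⟩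
    · simp only [dotProduct, Fin.sum_univ_three, Matrix.cons_val_zero, Matrix.cons_val_one,
        Matrix.head_cons, Matrix.cons_val_two, Matrix.tail_cons]
      field_simp
      ring
    · simp only [dotProduct, Fin.sum_univ_three, Matrix.cons_val_zero, Matrix.cons_val_one,
        Matrix.head_cons, Matrix.cons_val_two, Matrix.tail_cons]
      field_simp
      ring
    · intro x hx
      simp only [dotProduct, Fin.sum_univ_three] at hx
      refine ⟨x 0, x 2, ?_⟩
      funext mj
      fin_cases mj
      · show x 0 = _
        simp
      · show x 1 = _
        simp only [Pi.add_apply, Pi.smul_apply, smul_eq_mul, Fin.mk_one, Matrix.cons_val_one,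
          Matrix.head_cons, Matrix.cons_val_zero]
        field_simp
        linear_combination hx
      · show x 2 = _
        simp
    · intro A B h
      exact ⟨by simpa using congrFun h 0, by simpa using congrFun h 2⟩
  · have h0 : a 2 ≠ 0 := hk
    refine ⟨![1, 0, -(a 0)/(a 2)], ![0, 1, -(a 1)/(a 2)], ?_, ?_, ?_, ?_⟩
    · simp only [dotProduct, Fin.sum_univ_three, Matrix.cons_val_zero, Matrix.cons_val_one,
        Matrix.head_cons, Matrix.cons_val_two, Matrix.tail_cons]
      field_simp
      ring
    · simp only [dotProduct, Fin.sum_univ_three, Matrix.cons_val_zero, Matrix.cons_val_one,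
        Matrix.head_cons, Matrix.cons_val_two, Matrix.tail_cons]
      field_simp
      ring
    · intro x hx
      simp only [dotProduct, Fin.sum_univ_three] at hx
      refine ⟨x 0, x 1, ?_⟩
      funext mj
      fin_cases mj
      · show x 0 = _
        simp
      · show x 1 = _
        simp
      · show x 2 = _
        simp only [Pi.add_apply, Pi.smul_apply, smul_eq_mul, Fin.reduceFinMk, Matrix.cons_val_two,
          Matrix.tail_cons, Matrix.head_cons]
        field_simp
        linear_combination hx
    · intro A B h
      exact ⟨by simpa using congrFun h 0, by simpa using congrFun h 1⟩

lemma bm_tp_eval (v w : Fin 3 → ℂ) (F : MvPolynomial (Fin 3) ℂ) (t : ℂ) :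
    Polynomial.eval t
      (MvPolynomial.aeval (fun i => Polynomial.C (v i) * Polynomial.X + Polynomial.C (w i)) F)
      = eval (t • v + w) F := by
  have h : (Polynomial.evalRingHom t).comp
      (MvPolynomial.aeval (R := ℂ)
        (fun i => Polynomial.C (v i) * Polynomial.X + Polynomial.C (w i))).toRingHom
      = (MvPolynomial.eval (t • v + w)) := by
    apply MvPolynomial.ringHom_ext
    · intro c; simp
    · intro i
      rw [RingHom.comp_apply]
      simp only [AlgHom.toRingHom_eq_coe, RingHom.coe_coe, aeval_X, Polynomial.eval_add,
        Polynomial.eval_mul, Polynomial.eval_C, Polynomial.eval_X, Polynomial.coe_evalRingHom,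
        MvPolynomial.eval_X, Pi.add_apply, Pi.smul_apply, smul_eq_mul]
      ring
  exact RingHom.congr_fun h F

lemma bm_tp_natDegree (v w : Fin 3 → ℂ) (F : MvPolynomial (Fin 3) ℂ) (n : ℕ)
    (hF : F.totalDegree ≤ n) :
    (MvPolynomial.aeval (fun i => Polynomial.C (v i) * Polynomial.X + Polynomial.C (w i))
      F).natDegree ≤ n := by
  conv_lhs => rw [← support_sum_monomial_coeff F]
  rw [map_sum]
  refine Polynomial.natDegree_sum_le_of_forall_le _ _ fun d hd => ?_
  rw [MvPolynomial.aeval_monomial]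
  refine (Polynomial.natDegree_mul_le).trans ?_
  have h1 : (algebraMap ℂ (Polynomial ℂ) (coeff d F)).natDegree = 0 := Polynomial.natDegree_C _
  rw [h1, zero_add]
  have h2 : (Finsupp.prod d fun i k =>
      (Polynomial.C (v i) * Polynomial.X + Polynomial.C (w i)) ^ k).natDegree
      ≤ d.sum fun _ k => k := by
    rw [Finsupp.prod]
    refine (Polynomial.natDegree_prod_le _ _).trans ?_
    rw [Finsupp.sum]
    apply Finset.sum_le_sum
    intro i _
    refine (Polynomial.natDegree_pow_le).trans ?_
    have hlin : (Polynomial.C (v i) * Polynomial.X + Polynomial.C (w i)).natDegree ≤ 1 := by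
      refine (Polynomial.natDegree_add_le _ _).trans ?_
      simp only [Polynomial.natDegree_C, max_le_iff]
      exact ⟨(Polynomial.natDegree_C_mul_le _ _).trans (by simp), Nat.zero_le _⟩
    calc d i * _ ≤ d i * 1 := Nat.mul_le_mul_left _ hlin
    _ = d i := mul_one _
  exact h2.trans ((MvPolynomial.le_totalDegree hd).trans hF)

lemma bm_eval_smul {F : MvPolynomial (Fin 3) ℂ} {n : ℕ} (hF : F.IsHomogeneous n) (c : ℂ)
    (x : Fin 3 → ℂ) : eval (c • x) F = c ^ n * eval x F := by
  conv_lhs => rw [← support_sum_monomial_coeff F]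
  conv_rhs => rw [← support_sum_monomial_coeff F]
  rw [map_sum, map_sum, Finset.mul_sum]
  apply Finset.sum_congr rfl
  intro d hd
  rw [eval_monomial, eval_monomial]
  have hw : (d.sum fun _ k => k) = n := by
    have h' := hF (mem_support_iff.mp hd)
    rw [bm_weight] at h'
    rw [bm_dsum]
    exact h'
  have hkey : (d.prod fun i k => ((c • x) i) ^ k)
      = c ^ n * d.prod fun i k => x i ^ k := by
    rw [← hw, Finsupp.prod, Finsupp.prod, Finsupp.sum, ← Finset.prod_pow_eq_pow_sum,
      ← Finset.prod_mul_distrib]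
    apply Finset.prod_congr rfl
    intro i _
    simp [mul_pow]
  rw [hkey]
  ring

-- properties of the parametrized points t • b₁ + b₂
lemma bm_param_ne {b₁ b₂ : Fin 3 → ℂ}
    (hind : ∀ A B : ℂ, A • b₁ + B • b₂ = 0 → A = 0 ∧ B = 0) (t : ℂ) :
    t • b₁ + b₂ ≠ 0 := by
  intro h
  have := (hind t 1 (by simpa using h)).2
  exact one_ne_zero this

lemma bm_param_nonprop {b₁ b₂ : Fin 3 → ℂ}
    (hind : ∀ A B : ℂ, A • b₁ + B • b₂ = 0 → A = 0 ∧ B = 0) {t t' : ℂ} (h : t ≠ t') :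
    ∀ c : ℂ, t' • b₁ + b₂ ≠ c • (t • b₁ + b₂) := by
  intro c hc
  have h2 : (t' - c * t) • b₁ + (1 - c) • b₂ = 0 := by
    have : (t' - c * t) • b₁ + (1 - c) • b₂ = (t' • b₁ + b₂) - c • (t • b₁ + b₂) := by module
    rw [this, hc, sub_self]
  obtain ⟨hA, hB⟩ := hind _ _ h2
  have hc1 : c = 1 := by linear_combination -hB
  apply h
  have : t' - t = 0 := by rw [hc1] at hA; linear_combination hA
  linear_combination -this

lemma bm_dvd {L G : MvPolynomial (Fin 3) ℂ} (hL : L.IsHomogeneous 1) (hL0 : L ≠ 0)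
    (hvan : ∀ x : Fin 3 → ℂ, eval x L = 0 → eval x G = 0) : L ∣ G := by
  obtain ⟨k, hk⟩ : ∃ k, bmVec L k ≠ 0 := by
    by_contra h; push_neg at h; exact bm_vec_ne hL hL0 (funext h)
  set τ : Equiv.Perm (Fin 3) := Equiv.swap 0 k with hτ
  suffices h : rename (τ : Fin 3 → Fin 3) L ∣ rename (τ : Fin 3 → Fin 3) G by
    have h2 := map_dvd (rename (τ : Fin 3 → Fin 3)) h
    rw [rename_rename, rename_rename] at h2
    have hττ : ((τ : Fin 3 → Fin 3) ∘ (τ : Fin 3 → Fin 3)) = id := by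
      funext z; simp [hτ, Equiv.swap_apply_self]
    rwa [hττ, rename_id, AlgHom.id_apply, AlgHom.id_apply] at h2
  set L' := rename (τ : Fin 3 → Fin 3) L with hL'def
  set G' := rename (τ : Fin 3 → Fin 3) G with hG'def
  have hL' : L'.IsHomogeneous 1 := hL.rename_isHomogeneous
  have hL'0 : L' ≠ 0 := by
    intro h
    apply hL0
    have := congrArg (rename (τ : Fin 3 → Fin 3)) h
    rw [hL'def, rename_rename] at this
    have hττ : ((τ : Fin 3 → Fin 3) ∘ (τ : Fin 3 → Fin 3)) = id := by
      funext z; simp [hτ, Equiv.swap_apply_self]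
    rwa [hττ, rename_id, map_zero] at this
  have hkey : ∀ x : Fin 3 → ℂ, eval x L' = 0 → eval x G' = 0 := by
    intro x hx
    rw [hL'def, eval_rename] at hx
    rw [hG'def, eval_rename]
    exact hvan _ hx
  set a : Fin 3 → ℂ := bmVec L' with ha
  have ha0 : a 0 ≠ 0 := by
    rw [ha]
    show coeff (Finsupp.single (0 : Fin 3) 1) L' ≠ 0
    have : Finsupp.single (0 : Fin 3) 1 = Finsupp.mapDomain (τ : Fin 3 → Fin 3)
        (Finsupp.single k 1) := by
      rw [Finsupp.mapDomain_single]
      simp [hτ, Equiv.swap_apply_right]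
    rw [this, hL'def, coeff_rename_mapDomain _ τ.injective]
    exact hk
  -- the substitution of X 0 by r kills G'
  set r : MvPolynomial (Fin 2) ℂ :=
    C (a 0)⁻¹ * (-(C (a 1) * X 0) - C (a 2) * X 1) with hr
  set v : Fin 3 → MvPolynomial (Fin 2) ℂ := ![r, X 0, X 1] with hv
  have hψ : MvPolynomial.aeval v G' = 0 := by
    apply MvPolynomial.funext
    intro x
    have hcomp : eval x (MvPolynomial.aeval v G') = eval (fun i => eval x (v i)) G' := by
      have h : (MvPolynomial.eval x).comp (MvPolynomial.aeval (R := ℂ) v).toRingHom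
          = MvPolynomial.eval (fun i => eval x (v i)) := by
        apply MvPolynomial.ringHom_ext
        · intro c; simp
        · intro i; simp
      exact RingHom.congr_fun h G'
    rw [map_zero, hcomp]
    apply hkey
    rw [bm_eval_dot hL']
    show (a ⬝ᵥ fun i => eval x (v i)) = 0
    rw [dotProduct, Fin.sum_univ_three]
    show a 0 * eval x r + a 1 * eval x (X 0) + a 2 * eval x (X 1) = 0
    rw [hr]
    simp only [_root_.map_mul, eval_C, map_sub, map_neg, eval_X]
    field_simp
    ring
  -- now use finSuccEquiv
  set φ := MvPolynomial.finSuccEquiv ℂ 2 with hφ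
  have hC : ∀ c : ℂ, φ (C c) = Polynomial.C (C c) := by
    intro c
    rw [hφ, finSuccEquiv_apply]
    simp
  have hX1 : φ (X 1) = Polynomial.C (X 0) := by
    have : (1 : Fin 3) = Fin.succ 0 := rfl
    rw [this, hφ, finSuccEquiv_X_succ]
  have hX2 : φ (X 2) = Polynomial.C (X 1) := by
    have : (2 : Fin 3) = Fin.succ 1 := rfl
    rw [this, hφ, finSuccEquiv_X_succ]
  have hLdecomp : L' = C (a 0) * X 0 + (C (a 1) * X 1 + C (a 2) * X 2) := by
    have h := bm_eq_sum L' hL'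
    rw [Fin.sum_univ_three] at h
    rw [h]; ring
  have hCr : (Polynomial.C (C (a 0)) : Polynomial (MvPolynomial (Fin 2) ℂ)) * Polynomial.C r
      = Polynomial.C (-(C (a 1) * X 0) - C (a 2) * X 1) := by
    rw [← Polynomial.C_mul]
    congr 1
    rw [hr, ← mul_assoc, ← C_mul, mul_inv_cancel₀ ha0, C_1, one_mul]
  have hφL : φ L' = Polynomial.C (C (a 0)) * (Polynomial.X - Polynomial.C r) := by
    rw [hLdecomp]
    rw [map_add, map_add, _root_.map_mul, _root_.map_mul, _root_.map_mul, hC, hC, hC, hX1, hX2]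
    rw [hφ, finSuccEquiv_X_zero, mul_sub, hCr]
    rw [← Polynomial.C_mul, ← Polynomial.C_mul, ← Polynomial.C_add, sub_eq_add_neg,
      ← Polynomial.C_neg]
    congr 1
    ring
  have hroot : Polynomial.IsRoot (φ G') r := by
    show Polynomial.eval r (φ G') = 0
    have h : (Polynomial.evalRingHom r).comp
        (φ : MvPolynomial (Fin 3) ℂ →+* Polynomial (MvPolynomial (Fin 2) ℂ))
        = (MvPolynomial.aeval v).toRingHom := by
      apply MvPolynomial.ringHom_ext
      · intro c
        rw [RingHom.comp_apply]
        show Polynomial.eval r (φ (C c)) = MvPolynomial.aeval v (C c)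
        rw [hC]
        simp
      · intro i
        rw [RingHom.comp_apply]
        show Polynomial.eval r (φ (X i)) = MvPolynomial.aeval v (X i)
        fin_cases i
        · rw [show X (⟨0, by norm_num⟩ : Fin 3) = X (0 : Fin 3) from rfl, hφ,
            finSuccEquiv_X_zero]
          simp [hv]
        · rw [show X (⟨1, by norm_num⟩ : Fin 3) = X (1 : Fin 3) from rfl, hX1]
          simp [hv]
        · rw [show X (⟨2, by norm_num⟩ : Fin 3) = X (2 : Fin 3) from rfl, hX2]
          simp [hv]
    have h2 := RingHom.congr_fun h G'
    rw [RingHom.comp_apply] at h2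
    show Polynomial.eval r (φ G') = 0
    calc Polynomial.eval r (φ G') = MvPolynomial.aeval v G' := h2
    _ = 0 := hψ
  obtain ⟨w, hw⟩ := Polynomial.dvd_iff_isRoot.mpr hroot
  refine ⟨φ.symm (Polynomial.C (C (a 0)⁻¹) * w), ?_⟩
  apply φ.injective
  rw [_root_.map_mul, AlgEquiv.apply_symm_apply, hφL, hw]
  have hone : (Polynomial.C (C (a 0)) : Polynomial (MvPolynomial (Fin 2) ℂ))
      * Polynomial.C (C (a 0)⁻¹) = 1 := by
    rw [← Polynomial.C_mul, ← C_mul, mul_inv_cancel₀ ha0, C_1, Polynomial.C_1]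
  linear_combination (-((Polynomial.X - Polynomial.C r) * w)) * hone

lemma bm_quot_homog {L Q : MvPolynomial (Fin 3) ℂ} (hL : L.IsHomogeneous 1) (hL0 : L ≠ 0)
    (hLQ : (L * Q).IsHomogeneous 3) : Q.IsHomogeneous 2 := by
  by_cases hQ0 : Q = 0
  · rw [hQ0]; exact isHomogeneous_zero _ _ _
  have h1 : homogeneousComponent 3 (L * Q) = L * Q := by
    rw [homogeneousComponent_of_mem ((mem_homogeneousSubmodule _ _).mpr hLQ), if_pos rfl]
  have key : L * Q = if 2 ∈ range (Q.totalDegree + 1)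
      then L * homogeneousComponent 2 Q else 0 := by
    calc L * Q = homogeneousComponent 3 (L * Q) := h1.symm
    _ = homogeneousComponent 3 (L * ∑ i ∈ range (Q.totalDegree + 1),
        homogeneousComponent i Q) := by rw [sum_homogeneousComponent]
    _ = homogeneousComponent 3 (∑ i ∈ range (Q.totalDegree + 1),
        L * homogeneousComponent i Q) := by rw [Finset.mul_sum]
    _ = ∑ i ∈ range (Q.totalDegree + 1),
        homogeneousComponent 3 (L * homogeneousComponent i Q) :=
      map_sum (homogeneousComponent 3) _ _
    _ = ∑ i ∈ range (Q.totalDegree + 1),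
        if (3 : ℕ) = 1 + i then L * homogeneousComponent i Q else 0 := by
      apply Finset.sum_congr rfl
      intro i _
      exact homogeneousComponent_of_mem ((mem_homogeneousSubmodule _ _).mpr
        (hL.mul (homogeneousComponent_isHomogeneous i Q)))
    _ = ∑ i ∈ range (Q.totalDegree + 1),
        if i = 2 then L * homogeneousComponent i Q else 0 := by
      apply Finset.sum_congr rfl
      intro i _
      exact if_congr (by omega) rfl rfl
    _ = if 2 ∈ range (Q.totalDegree + 1) then L * homogeneousComponent 2 Q else 0 :=
      Finset.sum_ite_eq' _ _ _
  by_cases h2 : 2 ∈ range (Q.totalDegree + 1)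
  · rw [if_pos h2] at key
    have := mul_left_cancel₀ hL0 key
    rw [this]
    exact homogeneousComponent_isHomogeneous 2 Q
  · rw [if_neg h2] at key
    rcases mul_eq_zero.mp key with h | h
    · exact absurd h hL0
    · exact absurd h hQ0

lemma bm_pigeon (b₁ b₂ : Fin 3 → ℂ) (n : Fin 3 → MvPolynomial (Fin 3) ℂ)
    (hvan : ∀ t : ℂ, eval (t • b₁ + b₂) (∏ i, n i) = 0) :
    ∃ (i : Fin 3) (t t' : ℂ), t ≠ t' ∧ eval (t • b₁ + b₂) (n i) = 0 ∧
      eval (t' • b₁ + b₂) (n i) = 0 := by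
  have hex : ∀ t : ℂ, ∃ i, eval (t • b₁ + b₂) (n i) = 0 := by
    intro t
    have h := hvan t
    rw [map_prod] at h
    obtain ⟨i, -, hi⟩ := Finset.prod_eq_zero_iff.mp h
    exact ⟨i, hi⟩
  choose f hf using hex
  have hcard : (Finset.univ : Finset (Fin 3)).card
      < ((Finset.range 4).image (Nat.cast : ℕ → ℂ)).card := by
    rw [Finset.card_image_of_injective _ Nat.cast_injective, Finset.card_range,
      Finset.card_univ]
    simp
  obtain ⟨t, -, t', -, hne, heq⟩ :=
    Finset.exists_ne_map_eq_of_card_lt_of_maps_to hcard (fun t _ => Finset.mem_univ (f t))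
  exact ⟨f t, t, t', hne, hf t, heq ▸ hf t'⟩

lemma bm_row_case
    (l : Fin 3 → MvPolynomial (Fin 3) ℂ)
    (hl : ∀ i, (l i).IsHomogeneous 1) (hl0 : ∀ i, l i ≠ 0)
    (P : Fin 3 → Fin 3 → (Fin 3 → ℂ))
    (hP0 : ∀ i j, P i j ≠ 0)
    (hPl : ∀ i j, eval (P i j) (l i) = 0)
    (hPdist : ∀ i j i' j', (i, j) ≠ (i', j') → ∀ c : ℂ, P i' j' ≠ c • P i j)
    (L : MvPolynomial (Fin 3) ℂ) (hL : L.IsHomogeneous 1)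
    (s : Finset (Fin 3 × Fin 3)) (hs : s.card = 3)
    (honL : ∀ p : Fin 3 × Fin 3, eval (P p.1 p.2) L = 0 ↔ p ∈ s)
    (i : Fin 3) (j₁ j₂ : Fin 3) (hj : j₁ ≠ j₂) (h1 : (i, j₁) ∈ s) (h2 : (i, j₂) ∈ s) :
    ∃ Q : MvPolynomial (Fin 3) ℂ, Q ≠ 0 ∧ Q.IsHomogeneous 2 ∧
      ∀ p : Fin 3 × Fin 3, p ∉ s → eval (P p.1 p.2) Q = 0 := by
  have hxy : ∀ c : ℂ, P i j₂ ≠ c • P i j₁ :=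
    hPdist i j₁ i j₂ (by simp [hj])
  obtain ⟨c, hc⟩ := bm_la (bm_vec_ne (hl i) (hl0 i)) (hP0 i j₁) hxy
    (by rw [← bm_eval_dot (hl i)]; exact hPl i j₁)
    (by rw [← bm_eval_dot (hl i)]; exact hPl i j₂)
    (by rw [← bm_eval_dot hL]; exact (honL (i, j₁)).mpr h1)
    (by rw [← bm_eval_dot hL]; exact (honL (i, j₂)).mpr h2)
  have hrow : ∀ j, (i, j) ∈ s := by
    intro j
    apply (honL (i, j)).mp
    rw [bm_eval_dot hL, hc, smul_dotProduct]
    rw [show bmVec (l i) ⬝ᵥ P i j = 0 from by rw [← bm_eval_dot (hl i)]; exact hPl i j]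
    simp
  have hseq : s = Finset.univ.image (fun j => (i, j)) := by
    symm
    apply Finset.eq_of_subset_of_card_le
    · intro p hp
      obtain ⟨j, -, rfl⟩ := Finset.mem_image.mp hp
      exact hrow j
    · rw [hs, Finset.card_image_of_injective _ (fun a b h => ((Prod.mk.injEq _ _ _ _).mp h).2)]
      simp
  refine ⟨∏ t ∈ Finset.univ.erase i, l t, ?_, ?_, ?_⟩
  · rw [Finset.prod_ne_zero_iff]
    exact fun t _ => hl0 t
  · have h := MvPolynomial.IsHomogeneous.prod (Finset.univ.erase i) l (fun _ => 1)
      (fun t _ => hl t)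
    have hc2 : ∑ _t ∈ Finset.univ.erase i, (1 : ℕ) = 2 := by
      rw [Finset.sum_const, Finset.card_erase_of_mem (Finset.mem_univ i), Finset.card_univ]
      simp
    rwa [hc2] at h
  · intro p hp
    have hpi : p.1 ≠ i := by
      intro h
      apply hp
      rw [hseq]
      exact Finset.mem_image.mpr ⟨p.2, Finset.mem_univ _, by rw [← h]⟩
    rw [map_prod]
    exact Finset.prod_eq_zero (Finset.mem_erase.mpr ⟨hpi, Finset.mem_univ _⟩) (hPl p.1 p.2)

lemma bm_basis_avoid {a : Fin 3 → ℂ} (ha : a ≠ 0) (x : Fin 3 → (Fin 3 → ℂ))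
    (hx : ∀ k, a ⬝ᵥ x k = 0) (hx0 : ∀ k, x k ≠ 0) :
    ∃ (b₁ b₂ : Fin 3 → ℂ) (A B : Fin 3 → ℂ),
      a ⬝ᵥ b₁ = 0 ∧ a ⬝ᵥ b₂ = 0 ∧
      (∀ y : Fin 3 → ℂ, a ⬝ᵥ y = 0 → ∃ A' B' : ℂ, y = A' • b₁ + B' • b₂) ∧
      (∀ A' B' : ℂ, A' • b₁ + B' • b₂ = 0 → A' = 0 ∧ B' = 0) ∧
      (∀ k, x k = A k • b₁ + B k • b₂) ∧ (∀ k, B k ≠ 0) := by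
  obtain ⟨c₁, c₂, h1, h2, hspan, hind⟩ := bm_basis ha
  have hco : ∀ k, ∃ A B : ℂ, x k = A • c₁ + B • c₂ := fun k => hspan _ (hx k)
  choose A0 B0 hAB using hco
  obtain ⟨γ, hγ⟩ := Infinite.exists_notMem_finset
      ({B0 0 / A0 0, B0 1 / A0 1, B0 2 / A0 2} : Finset ℂ)
  refine ⟨c₁ + γ • c₂, c₂, A0, fun k => B0 k - γ * A0 k, ?_, h2, ?_, ?_, ?_, ?_⟩
  · rw [dotProduct_add, dotProduct_smul, h1, h2]
    simp
  · intro y hy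
    obtain ⟨A', B', hy'⟩ := hspan y hy
    refine ⟨A', B' - γ * A', ?_⟩
    rw [hy']
    module
  · intro A' B' h
    have h' : A' • c₁ + (A' * γ + B') • c₂ = 0 := by
      rw [← h]; module
    obtain ⟨hA, hB⟩ := hind _ _ h'
    refine ⟨hA, ?_⟩
    rw [hA] at hB
    simpa using hB
  · intro k
    rw [hAB k]
    module
  · intro k hk0
    replace hk0 : B0 k - γ * A0 k = 0 := hk0
    by_cases hA : A0 k = 0
    · rw [hA, mul_zero, sub_zero] at hk0
      apply hx0 k
      rw [hAB k, hA, hk0]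
      simp
    · apply hγ
      have hγval : γ = B0 k / A0 k := by
        field_simp
        linear_combination -hk0
      rw [hγval]
      fin_cases k
      · exact Finset.mem_insert_self _ _
      · exact Finset.mem_insert_of_mem (Finset.mem_insert_self _ _)
      · exact Finset.mem_insert_of_mem (Finset.mem_insert_of_mem (Finset.mem_singleton_self _))

/-- Braikenridge–Maclaurin theorem: if three red lines meet three blue lines in
9 distinct points of ℙ²(ℂ), and exactly 3 of these points lie on a line `L`
(which contains none of the other 6 points), then the remaining 6 points lie on a
(possibly degenerate) conic. -/
theorem braikenridge_maclaurin
    (l m : Fin 3 → MvPolynomial (Fin 3) ℂ)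
    (hl : ∀ i, (l i).IsHomogeneous 1) (hm : ∀ j, (m j).IsHomogeneous 1)
    (hl0 : ∀ i, l i ≠ 0) (hm0 : ∀ j, m j ≠ 0)
    (P : Fin 3 → Fin 3 → (Fin 3 → ℂ))
    (hP0 : ∀ i j, P i j ≠ 0)
    (hPl : ∀ i j, eval (P i j) (l i) = 0)
    (hPm : ∀ i j, eval (P i j) (m j) = 0)
    (hPdist : ∀ i j i' j', (i, j) ≠ (i', j') → ∀ c : ℂ, P i' j' ≠ c • P i j)
    (L : MvPolynomial (Fin 3) ℂ) (hL : L.IsHomogeneous 1) (hL0 : L ≠ 0)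
    (s : Finset (Fin 3 × Fin 3)) (hs : s.card = 3)
    (honL : ∀ p : Fin 3 × Fin 3, eval (P p.1 p.2) L = 0 ↔ p ∈ s) :
    ∃ Q : MvPolynomial (Fin 3) ℂ, Q ≠ 0 ∧ Q.IsHomogeneous 2 ∧
      ∀ p : Fin 3 × Fin 3, p ∉ s → eval (P p.1 p.2) Q = 0 := by
  by_cases hA : ∃ i j₁ j₂, j₁ ≠ j₂ ∧ (i, j₁) ∈ s ∧ (i, j₂) ∈ s
  · obtain ⟨i, j₁, j₂, hj, h1, h2⟩ := hA
    exact bm_row_case l hl hl0 P hP0 hPl hPdist L hL s hs honL i j₁ j₂ hj h1 h2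
  by_cases hB : ∃ j i₁ i₂, i₁ ≠ i₂ ∧ (i₁, j) ∈ s ∧ (i₂, j) ∈ s
  · obtain ⟨j, i₁, i₂, hi, h1, h2⟩ := hB
    have hmem : ∀ p : Fin 3 × Fin 3, p ∈ s.image Prod.swap ↔ (p.2, p.1) ∈ s := by
      intro p
      constructor
      · intro hp
        obtain ⟨q, hq, rfl⟩ := Finset.mem_image.mp hp
        simpa using hq
      · intro hp
        exact Finset.mem_image.mpr ⟨(p.2, p.1), hp, by simp⟩
    obtain ⟨Q, hQ0, hQh, hQv⟩ := bm_row_case m hm hm0 (fun j i => P i j)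
      (fun j i => hP0 i j) (fun j i => hPm i j)
      (fun j i j' i' h c => hPdist i j i' j'
        (fun he => h (by rw [Prod.ext_iff] at he ⊢; exact ⟨he.2, he.1⟩)) c)
      L hL (s.image Prod.swap)
      (by rw [Finset.card_image_of_injective _ Prod.swap_injective]; exact hs)
      (fun p => by rw [hmem p]; exact honL (p.2, p.1))
      j i₁ i₂ hi ((hmem (j, i₁)).mpr h1) ((hmem (j, i₂)).mpr h2)
    refine ⟨Q, hQ0, hQh, ?_⟩
    intro p hp
    exact hQv (p.2, p.1) (fun hmem' => hp (by simpa using (hmem (p.2, p.1)).mp hmem'))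
  push_neg at hA hB
  -- Case C : each row and column contains at most one point of s
  have hF₁hom : (∏ i, l i).IsHomogeneous 3 := by
    have h := MvPolynomial.IsHomogeneous.prod Finset.univ l (fun _ => 1) (fun t _ => hl t)
    simpa using h
  have hF₂hom : (∏ j, m j).IsHomogeneous 3 := by
    have h := MvPolynomial.IsHomogeneous.prod Finset.univ m (fun _ => 1) (fun t _ => hm t)
    simpa using h
  have hF₁van : ∀ i j, eval (P i j) (∏ i', l i') = 0 := fun i j => by
    rw [map_prod]; exact Finset.prod_eq_zero (Finset.mem_univ i) (hPl i j)
  have hF₂van : ∀ i j, eval (P i j) (∏ j', m j') = 0 := fun i j => by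
    rw [map_prod]; exact Finset.prod_eq_zero (Finset.mem_univ j) (hPm i j)
  have ha : bmVec L ≠ 0 := bm_vec_ne hL hL0
  obtain ⟨p₀, p₁, p₂, hne01, hne02, hne12, hs3⟩ := Finset.card_eq_three.mp hs
  set q : Fin 3 → Fin 3 × Fin 3 := ![p₀, p₁, p₂] with hq
  have hq_mem : ∀ k, q k ∈ s := by
    intro k
    fin_cases k <;>
      simp only [hq, Matrix.cons_val_zero, Matrix.cons_val_one, Matrix.head_cons,
        Matrix.cons_val_two, Matrix.tail_cons] <;>
      rw [hs3]
    · exact Finset.mem_insert_self _ _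
    · exact Finset.mem_insert_of_mem (Finset.mem_insert_self _ _)
    · exact Finset.mem_insert_of_mem (Finset.mem_insert_of_mem (Finset.mem_singleton_self _))
  have hq_inj : ∀ k k' : Fin 3, k ≠ k' → q k ≠ q k' := by
    intro k k' hkk' hqq
    fin_cases k <;> fin_cases k' <;>
      simp only [hq, Matrix.cons_val_zero, Matrix.cons_val_one, Matrix.head_cons,
        Matrix.cons_val_two, Matrix.tail_cons] at hqq <;>
      first
        | exact hkk' rfl
        | exact hne01 hqq
        | exact hne02 hqq
        | exact hne12 hqq
        | exact hne01 hqq.symm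
        | exact hne02 hqq.symm
        | exact hne12 hqq.symm
  set xs : Fin 3 → (Fin 3 → ℂ) := fun k => P (q k).1 (q k).2 with hxs
  have hxs_ker : ∀ k, bmVec L ⬝ᵥ xs k = 0 := by
    intro k
    rw [← bm_eval_dot hL]
    exact (honL (q k)).mpr (hq_mem k)
  have hxs_ne : ∀ k, xs k ≠ 0 := fun k => hP0 _ _
  have hxsprop : ∀ k k' : Fin 3, k ≠ k' → ∀ c : ℂ, xs k' ≠ c • xs k := by
    intro k k' hkk' c
    exact hPdist (q k).1 (q k).2 (q k').1 (q k').2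
      (by simpa only [Prod.mk.eta] using hq_inj k k' hkk') c
  obtain ⟨b₁, b₂, A, B, hb₁, hb₂, hspan, hind, hcoords, hBne⟩ :=
    bm_basis_avoid ha xs hxs_ker hxs_ne
  set r : Fin 3 → ℂ := fun k => A k / B k with hr
  have hrdist : ∀ k k' : Fin 3, k ≠ k' → r k ≠ r k' := by
    intro k k' hkk' hreq
    simp only [hr] at hreq
    rw [div_eq_div_iff (hBne k) (hBne k')] at hreq
    apply hxsprop k k' hkk' (B k' / B k)
    rw [hcoords k, hcoords k', smul_add, smul_smul, smul_smul]
    have e1 : A k' = B k' / B k * A k := by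
      field_simp [hBne k]
      linear_combination -hreq
    have e2 : (B k' : ℂ) = B k' / B k * B k := (div_mul_cancel₀ (B k') (hBne k)).symm
    rw [← e1, ← e2]
  have htp_eval : ∀ (F : MvPolynomial (Fin 3) ℂ) (t : ℂ),
      Polynomial.eval t (MvPolynomial.aeval
        (fun i => Polynomial.C (b₁ i) * Polynomial.X + Polynomial.C (b₂ i)) F)
      = eval (t • b₁ + b₂) F := fun F t => bm_tp_eval b₁ b₂ F t
  have hroots : ∀ F : MvPolynomial (Fin 3) ℂ, F.IsHomogeneous 3 →
      (∀ k, eval (xs k) F = 0) → ∀ k, Polynomial.eval (r k) (MvPolynomial.aeval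
        (fun i => Polynomial.C (b₁ i) * Polynomial.X + Polynomial.C (b₂ i)) F) = 0 := by
    intro F hFh hFv k
    rw [htp_eval]
    have hxk : xs k = (B k) • (r k • b₁ + b₂) := by
      rw [hcoords k, smul_add, smul_smul]
      congr 2
      simp only [hr]
      rw [mul_comm, div_mul_cancel₀ _ (hBne k)]
    have hek := hFv k
    rw [hxk, bm_eval_smul hFh] at hek
    rcases mul_eq_zero.mp hek with h | h
    · exact absurd h (pow_ne_zero _ (hBne k))
    · exact h
  have hqp_monic : ((Polynomial.X - Polynomial.C (r 0)) *
      ((Polynomial.X - Polynomial.C (r 1)) * (Polynomial.X - Polynomial.C (r 2)))).Monic :=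
    (Polynomial.monic_X_sub_C _).mul ((Polynomial.monic_X_sub_C _).mul
      (Polynomial.monic_X_sub_C _))
  have hqp_deg : ((Polynomial.X - Polynomial.C (r 0)) *
      ((Polynomial.X - Polynomial.C (r 1)) * (Polynomial.X - Polynomial.C (r 2)))).natDegree
      = 3 := by
    rw [(Polynomial.monic_X_sub_C _).natDegree_mul ((Polynomial.monic_X_sub_C _).mul
      (Polynomial.monic_X_sub_C _)),
      (Polynomial.monic_X_sub_C _).natDegree_mul (Polynomial.monic_X_sub_C _)]
    simp
  have hdvd : ∀ g : Polynomial ℂ, (∀ k, Polynomial.eval (r k) g = 0) →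
      ((Polynomial.X - Polynomial.C (r 0)) *
      ((Polynomial.X - Polynomial.C (r 1)) * (Polynomial.X - Polynomial.C (r 2)))) ∣ g := by
    intro g hg
    have d0 : (Polynomial.X - Polynomial.C (r 0)) ∣ g := Polynomial.dvd_iff_isRoot.mpr (hg 0)
    have d1 : (Polynomial.X - Polynomial.C (r 1)) ∣ g := Polynomial.dvd_iff_isRoot.mpr (hg 1)
    have d2 : (Polynomial.X - Polynomial.C (r 2)) ∣ g := Polynomial.dvd_iff_isRoot.mpr (hg 2)
    have c01 : IsCoprime (Polynomial.X - Polynomial.C (r 0))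
        (Polynomial.X - Polynomial.C (r 1)) :=
      Polynomial.isCoprime_X_sub_C_of_isUnit_sub
        ((sub_ne_zero.mpr (hrdist 0 1 (by decide))).isUnit)
    have c02 : IsCoprime (Polynomial.X - Polynomial.C (r 0))
        (Polynomial.X - Polynomial.C (r 2)) :=
      Polynomial.isCoprime_X_sub_C_of_isUnit_sub
        ((sub_ne_zero.mpr (hrdist 0 2 (by decide))).isUnit)
    have c12 : IsCoprime (Polynomial.X - Polynomial.C (r 1))
        (Polynomial.X - Polynomial.C (r 2)) :=
      Polynomial.isCoprime_X_sub_C_of_isUnit_sub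
        ((sub_ne_zero.mpr (hrdist 1 2 (by decide))).isUnit)
    exact (c01.mul_right c02).mul_dvd d0 (c12.mul_dvd d1 d2)
  have hconst : ∀ F : MvPolynomial (Fin 3) ℂ, F.IsHomogeneous 3 →
      (∀ k, eval (xs k) F = 0) → ∃ c : ℂ,
      MvPolynomial.aeval
        (fun i => Polynomial.C (b₁ i) * Polynomial.X + Polynomial.C (b₂ i)) F
      = ((Polynomial.X - Polynomial.C (r 0)) *
        ((Polynomial.X - Polynomial.C (r 1)) * (Polynomial.X - Polynomial.C (r 2))))
        * Polynomial.C c := by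
    intro F hFh hFv
    obtain ⟨h, hh⟩ := hdvd _ (hroots F hFh hFv)
    by_cases hh0 : h = 0
    · exact ⟨0, by rw [hh, hh0]; simp⟩
    · have hdeg : (MvPolynomial.aeval
          (fun i => Polynomial.C (b₁ i) * Polynomial.X + Polynomial.C (b₂ i)) F).natDegree
          ≤ 3 := bm_tp_natDegree _ _ _ _ hFh.totalDegree_le
      rw [hh, Polynomial.natDegree_mul hqp_monic.ne_zero hh0, hqp_deg] at hdeg
      have hd0 : h.natDegree = 0 := by omega
      obtain ⟨c, hc⟩ := Polynomial.natDegree_eq_zero.mp hd0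
      exact ⟨c, by rw [hh, ← hc]⟩
  obtain ⟨c₁, hc₁⟩ := hconst (∏ i, l i) hF₁hom (fun k => hF₁van (q k).1 (q k).2)
  obtain ⟨c₂, hc₂⟩ := hconst (∏ j, m j) hF₂hom (fun k => hF₂van (q k).1 (q k).2)
  have hc₁0 : c₁ ≠ 0 := by
    intro h0
    have hg0 : ∀ t : ℂ, eval (t • b₁ + b₂) (∏ i, l i) = 0 := by
      intro t
      rw [← htp_eval, hc₁, h0]
      simp
    obtain ⟨i, t, t', htne, hv, hv'⟩ := bm_pigeon b₁ b₂ l hg0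
    obtain ⟨c, hcLl⟩ := bm_la (bm_vec_ne (hl i) (hl0 i)) (bm_param_ne hind t)
      (bm_param_nonprop hind htne)
      (by rw [← bm_eval_dot (hl i)]; exact hv)
      (by rw [← bm_eval_dot (hl i)]; exact hv')
      (by rw [dotProduct_add, dotProduct_smul, hb₁, hb₂]; simp)
      (by rw [dotProduct_add, dotProduct_smul, hb₁, hb₂]; simp)
    have hrowsub : ∀ j, (i, j) ∈ s := by
      intro j
      apply (honL (i, j)).mp
      rw [bm_eval_dot hL]
      show bmVec L ⬝ᵥ P i j = 0
      rw [hcLl, smul_dotProduct,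
        show bmVec (l i) ⬝ᵥ P i j = 0 from by rw [← bm_eval_dot (hl i)]; exact hPl i j]
      simp
    exact hA i 0 1 (by decide) (hrowsub 0) (hrowsub 1)
  have hc₂0 : c₂ ≠ 0 := by
    intro h0
    have hg0 : ∀ t : ℂ, eval (t • b₁ + b₂) (∏ j, m j) = 0 := by
      intro t
      rw [← htp_eval, hc₂, h0]
      simp
    obtain ⟨j, t, t', htne, hv, hv'⟩ := bm_pigeon b₁ b₂ m hg0
    obtain ⟨c, hcLm⟩ := bm_la (bm_vec_ne (hm j) (hm0 j)) (bm_param_ne hind t)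
      (bm_param_nonprop hind htne)
      (by rw [← bm_eval_dot (hm j)]; exact hv)
      (by rw [← bm_eval_dot (hm j)]; exact hv')
      (by rw [dotProduct_add, dotProduct_smul, hb₁, hb₂]; simp)
      (by rw [dotProduct_add, dotProduct_smul, hb₁, hb₂]; simp)
    have hcolsub : ∀ i', (i', j) ∈ s := by
      intro i'
      apply (honL (i', j)).mp
      rw [bm_eval_dot hL]
      show bmVec L ⬝ᵥ P i' j = 0
      rw [hcLm, smul_dotProduct,
        show bmVec (m j) ⬝ᵥ P i' j = 0 from by rw [← bm_eval_dot (hm j)]; exact hPm i' j]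
      simp
    exact hB j 0 1 (by decide) (hcolsub 0) (hcolsub 1)
  -- the pencil cubic G
  set G : MvPolynomial (Fin 3) ℂ := C c₂ * (∏ i, l i) - C c₁ * (∏ j, m j) with hG
  have hGhom : G.IsHomogeneous 3 := (hF₁hom.C_mul c₂).sub (hF₂hom.C_mul c₁)
  have hGtp : MvPolynomial.aeval
      (fun i => Polynomial.C (b₁ i) * Polynomial.X + Polynomial.C (b₂ i)) G = 0 := by
    rw [hG, map_sub, _root_.map_mul, _root_.map_mul, hc₁, hc₂]
    rw [show (MvPolynomial.aeval
      (fun i => Polynomial.C (b₁ i) * Polynomial.X + Polynomial.C (b₂ i))) (C c₂)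
      = Polynomial.C c₂ from by simp [MvPolynomial.aeval_C, Polynomial.algebraMap_eq]]
    rw [show (MvPolynomial.aeval
      (fun i => Polynomial.C (b₁ i) * Polynomial.X + Polynomial.C (b₂ i))) (C c₁)
      = Polynomial.C c₁ from by simp [MvPolynomial.aeval_C, Polynomial.algebraMap_eq]]
    ring
  have hGvanPts : ∀ i j, eval (P i j) G = 0 := by
    intro i j
    rw [hG, map_sub, _root_.map_mul, _root_.map_mul, eval_C, eval_C, hF₁van i j, hF₂van i j]
    ring
  by_cases hG0 : G = 0
  · -- degenerate case: the two cubics are proportional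
    have hDeq : C c₂ * (∏ i, l i) = C c₁ * (∏ j, m j) := by
      have h := hG0
      rw [hG] at h
      exact sub_eq_zero.mp h
    have hiff : ∀ x : Fin 3 → ℂ, eval x (∏ i, l i) = 0 → eval x (∏ j, m j) = 0 := by
      intro x hx
      have h := congrArg (eval x) hDeq
      rw [_root_.map_mul, _root_.map_mul, eval_C, eval_C, hx, mul_zero] at h
      exact (mul_eq_zero.mp h.symm).resolve_left hc₁0
    have hD1 : ∀ i : Fin 3, ∃ (j : Fin 3) (cc : ℂ), cc ≠ 0 ∧
        bmVec (m j) = cc • bmVec (l i) := by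
      intro i
      obtain ⟨d₁, d₂, hd₁, hd₂, hdspan, hdind⟩ := bm_basis (bm_vec_ne (hl i) (hl0 i))
      have hvanF₂ : ∀ t : ℂ, eval (t • d₁ + d₂) (∏ j, m j) = 0 := by
        intro t
        apply hiff
        rw [map_prod]
        refine Finset.prod_eq_zero (Finset.mem_univ i) ?_
        rw [bm_eval_dot (hl i), dotProduct_add, dotProduct_smul, hd₁, hd₂]
        simp
      obtain ⟨j, t, t', htne, hv, hv'⟩ := bm_pigeon d₁ d₂ m hvanF₂
      obtain ⟨cc, hcc⟩ := bm_la (bm_vec_ne (hl i) (hl0 i)) (bm_param_ne hdind t)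
        (bm_param_nonprop hdind htne)
        (by rw [dotProduct_add, dotProduct_smul, hd₁, hd₂]; simp)
        (by rw [dotProduct_add, dotProduct_smul, hd₁, hd₂]; simp)
        (by rw [← bm_eval_dot (hm j)]; exact hv)
        (by rw [← bm_eval_dot (hm j)]; exact hv')
      refine ⟨j, cc, ?_, hcc⟩
      intro h0
      exact bm_vec_ne (hm j) (hm0 j) (by rw [hcc, h0, zero_smul])
    choose js cs hcs0 hcs using hD1
    by_cases hall : ∀ j : Fin 3, ∃ u : ℂ, u ≠ 0 ∧ bmVec (m j) = u • bmVec (m 0)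
    · refine ⟨m 0 * m 0, mul_ne_zero (hm0 0) (hm0 0), (hm 0).mul (hm 0), ?_⟩
      intro p hp
      obtain ⟨u, hu0, hu⟩ := hall p.2
      have h1 : bmVec (m p.2) ⬝ᵥ P p.1 p.2 = 0 := by
        rw [← bm_eval_dot (hm p.2)]; exact hPm p.1 p.2
      rw [hu, smul_dotProduct, smul_eq_mul] at h1
      have h2 : eval (P p.1 p.2) (m 0) = 0 := by
        rw [bm_eval_dot (hm 0)]
        exact (mul_eq_zero.mp h1).resolve_left hu0
      rw [_root_.map_mul, h2, mul_zero]
    · push_neg at hall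
      obtain ⟨j₁, hj₁⟩ := hall
      have hj₁' : ∀ u : ℂ, bmVec (m j₁) ≠ u • bmVec (m 0) := by
        intro u
        by_cases hu : u = 0
        · rw [hu, zero_smul]; exact bm_vec_ne (hm j₁) (hm0 j₁)
        · exact hj₁ u hu
      exfalso
      have hj₁0 : j₁ ≠ 0 := by
        intro h
        apply hj₁' 1
        rw [h, one_smul]
      have hinj : Function.Injective js := by
        intro i i' hii'
        by_contra hne
        have hll : bmVec (l i') = (cs i / cs i') • bmVec (l i) := by
          have h1 := hcs i
          have h2 := hcs i'
          rw [hii', h2] at h1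
          funext z
          have h3 := congrFun h1 z
          simp only [Pi.smul_apply, smul_eq_mul] at h3 ⊢
          field_simp [hcs0 i']
          linear_combination h3
        have hex : ∃ j'', ∀ c : ℂ, bmVec (m j'') ≠ c • bmVec (l i) := by
          by_contra hcon
          push_neg at hcon
          obtain ⟨c0, hc0⟩ := hcon 0
          obtain ⟨cj, hcj⟩ := hcon j₁
          have hc0ne : c0 ≠ 0 := by
            intro h
            exact bm_vec_ne (hm 0) (hm0 0) (by rw [hc0, h, zero_smul])
          apply hj₁' (cj / c0)
          rw [hcj, hc0, smul_smul]
          congr 1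
          field_simp
        obtain ⟨j'', hj''⟩ := hex
        have hκ : (cs i / cs i' : ℂ) ≠ 0 := div_ne_zero (hcs0 i) (hcs0 i')
        obtain ⟨c, hcp⟩ := bm_la (hP0 i j'') (bm_vec_ne (hl i) (hl0 i)) hj''
          (by rw [dotProduct_comm, ← bm_eval_dot (hl i)]; exact hPl i j'')
          (by rw [dotProduct_comm, ← bm_eval_dot (hm j'')]; exact hPm i j'')
          (by
            have hz : P i' j'' ⬝ᵥ bmVec (l i') = 0 := by
              rw [dotProduct_comm, ← bm_eval_dot (hl i')]; exact hPl i' j''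
            rw [hll, dotProduct_smul, smul_eq_mul] at hz
            exact (mul_eq_zero.mp hz).resolve_left hκ)
          (by rw [dotProduct_comm, ← bm_eval_dot (hm j'')]; exact hPm i' j'')
        exact hPdist i j'' i' j''
          (fun h => hne (congrArg Prod.fst h)) c hcp
      have hsurj : Function.Surjective js := (Finite.injective_iff_surjective.mp hinj)
      obtain ⟨a₀, ha₀⟩ := hsurj 0
      obtain ⟨a₁, ha₁⟩ := hsurj j₁
      have hm0vec : bmVec (m 0) = cs a₀ • bmVec (l a₀) := by rw [← ha₀]; exact hcs a₀
      have hmj₁vec : bmVec (m j₁) = cs a₁ • bmVec (l a₁) := by rw [← ha₁]; exact hcs a₁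
      obtain ⟨c, hcp⟩ := bm_la (hP0 a₀ j₁) (bm_vec_ne (hm 0) (hm0 0)) hj₁'
        (by
          rw [hm0vec, dotProduct_smul, smul_eq_mul,
            show P a₀ j₁ ⬝ᵥ bmVec (l a₀) = 0 from by
              rw [dotProduct_comm, ← bm_eval_dot (hl a₀)]; exact hPl a₀ j₁]
          ring)
        (by rw [dotProduct_comm, ← bm_eval_dot (hm j₁)]; exact hPm a₀ j₁)
        (by rw [dotProduct_comm, ← bm_eval_dot (hm 0)]; exact hPm a₁ 0)
        (by
          rw [hmj₁vec, dotProduct_smul, smul_eq_mul,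
            show P a₁ 0 ⬝ᵥ bmVec (l a₁) = 0 from by
              rw [dotProduct_comm, ← bm_eval_dot (hl a₁)]; exact hPl a₁ 0]
          ring)
      exact hPdist a₀ j₁ a₁ 0 (fun h => hj₁0 (congrArg Prod.snd h)) c hcp
  · -- main case: G ≠ 0, divide by L
    have hGker : ∀ x : Fin 3 → ℂ, eval x L = 0 → eval x G = 0 := by
      have hGline : ∀ t : ℂ, eval (t • b₁ + b₂) G = 0 := by
        intro t
        rw [← bm_tp_eval b₁ b₂ G t, hGtp]
        simp
      have hb₁G : eval b₁ G = 0 := by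
        have hswap : ∀ u : ℂ, u ≠ 0 → eval (u • b₂ + b₁) G = 0 := by
          intro u hu
          have heq : u • b₂ + b₁ = u • (u⁻¹ • b₁ + b₂) := by
            rw [smul_add, smul_smul, mul_inv_cancel₀ hu]
            module
          rw [heq, bm_eval_smul hGhom, hGline u⁻¹, mul_zero]
        have hpoly : (MvPolynomial.aeval
            (fun i => Polynomial.C (b₂ i) * Polynomial.X + Polynomial.C (b₁ i)) G) = 0 := by
          apply Polynomial.eq_zero_of_infinite_isRoot
          apply Set.Infinite.mono (s := ({0}ᶜ : Set ℂ))
          · intro u hu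
            show Polynomial.IsRoot _ u
            show Polynomial.eval u _ = 0
            rw [bm_tp_eval]
            exact hswap u hu
          · exact Set.Finite.infinite_compl (Set.finite_singleton 0)
        have h := congrArg (Polynomial.eval 0) hpoly
        rw [bm_tp_eval] at h
        simpa using h
      intro x hx
      rw [bm_eval_dot hL] at hx
      obtain ⟨A', B', hxd⟩ := hspan x hx
      by_cases hB' : B' = 0
      · rw [hxd, hB', zero_smul, add_zero, bm_eval_smul hGhom, hb₁G, mul_zero]
      · have heq : x = B' • ((A' / B') • b₁ + b₂) := by
          rw [hxd, smul_add, smul_smul, mul_div_cancel₀ _ hB']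
        rw [heq, bm_eval_smul hGhom, hGline (A' / B'), mul_zero]
    obtain ⟨Q, hQ⟩ := bm_dvd hL hL0 hGker
    refine ⟨Q, ?_, ?_, ?_⟩
    · intro h
      apply hG0
      rw [hQ, h, mul_zero]
    · exact bm_quot_homog hL hL0 (hQ ▸ hGhom)
    · intro p hp
      have h1 := hGvanPts p.1 p.2
      rw [hQ, _root_.map_mul] at h1
      rcases mul_eq_zero.mp h1 with h | h
      · exact absurd ((honL p).mp h) hp
      · exact h
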